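/- Assume n ∈ {2,3}, γ > 1, m = n-1, ε = γ-1, μ = λ-1 with 1 < λ < λ̂_n(γ). Define 𝔞_n = ((ε-2)/(mε))μ - 1 and 𝔔_n = ((ε-2)/(mε))²μ² - 2((ε+2)/(mε))μ + 1, and V_- = (𝔞_n - √𝔔_n)/2. Then V_- > -1. -/
import Mathlib


theorem stmt_13 (n γ lam : ℝ) (hn : n = 2 ∨ n = 3) (hγ : 1 < γ)
    (m ε μ : ℝ) (hm : m = n - 1) (hε : ε = γ - 1) (hμ : μ = lam - 1)
    (hl1 : 1 < lam)
    (hl2 : lam < 1 + (n - 1) * (γ - 1) / ((γ + 1) + Real.sqrt (8 * (γ - 1))))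
    (aN QN Vm : ℝ)
    (haN : aN = ((ε - 2) / (m * ε)) * μ - 1)
    (hQN : QN = ((ε - 2) / (m * ε)) ^ 2 * μ ^ 2 - 2 * ((ε + 2) / (m * ε)) * μ + 1)
    (hVm : Vm = (aN - Real.sqrt QN) / 2) :
    Vm > -1 := by
  set s := Real.sqrt (8 * (γ - 1)) with hsdef
  have hs : 0 ≤ s := Real.sqrt_nonneg _
  have hm0 : 0 < m := by rcases hn with h | h <;> rw [hm, h] <;> norm_num
  have hε0 : 0 < ε := by rw [hε]; linarith
  have hμ0 : 0 < μ := by rw [hμ]; linarith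
  have hme : 0 < m * ε := mul_pos hm0 hε0
  have hD : 0 < (γ + 1) + s := by linarith
  have hbound : μ * ((γ + 1) + s) < m * ε := by
    have h2 : μ < m * ε / ((γ + 1) + s) := by
      rw [hμ, hm, hε]; linarith
    exact (lt_div_iff₀ hD).mp h2
  -- key : (2-ε)*μ < m*ε
  have key1 : (2 - ε) * μ < m * ε := by nlinarith [mul_pos hμ0 hε0, mul_nonneg hμ0.le hs]
  have hpos : 0 < aN + 2 := by
    have hid : aN + 2 = ((ε - 2) * μ + m * ε) / (m * ε) := by
      rw [haN]; field_simp; ring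
    rw [hid]
    exact div_pos (by linarith) hme
  have hQlt : QN < (aN + 2) ^ 2 := by
    have hid : (aN + 2) ^ 2 - QN = 4 * μ / m := by
      rw [haN, hQN]; field_simp; ring
    have : 0 < 4 * μ / m := div_pos (by linarith) hm0
    linarith
  have hsq : Real.sqrt QN < aN + 2 := (Real.sqrt_lt' hpos).mpr hQlt
  rw [hVm]; linarith
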